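/- For an odd prime p with p ≡ 1 (mod 3), writing p = a² + 3b² with a ≡ 2 (mod 3) and b > 0, the sum over nonzero c ∈ 𝔽_p of the Legendre symbol ((c³+1)/p) equals 2a − 1. For p ≡ 2 (mod 3), this sum equals −1. -/

import Mathlib

open Finset Complex


-- roots of z^3=1 in a domain
lemma cube_roots_cases {K : Type*} [CommRing K] [IsDomain K] {ζ z : K}
    (hζ3 : ζ ^ 3 = 1) (hζ1 : ζ ≠ 1) (hz : z ^ 3 = 1) : z = 1 ∨ z = ζ ∨ z = ζ ^ 2 := by
  have hsum : ζ ^ 2 + ζ + 1 = 0 := by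
    have h := mul_eq_zero.mp (show (ζ - 1) * (ζ ^ 2 + ζ + 1) = 0 by linear_combination hζ3)
    rcases h with h | h
    · exact (hζ1 (sub_eq_zero.mp h)).elim
    · exact h
  have hprod : (z - 1) * ((z - ζ) * (z - ζ ^ 2)) = 0 := by
    linear_combination hz + (z - 1) * hζ3 + (z - z ^ 2) * hsum
  rcases mul_eq_zero.mp hprod with h | h
  · exact Or.inl (sub_eq_zero.mp h)
  · rcases mul_eq_zero.mp h with h | h
    · exact Or.inr (Or.inl (sub_eq_zero.mp h))
    · exact Or.inr (Or.inr (sub_eq_zero.mp h))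

lemma exists_cube_root_of_unity {p : ℕ} [Fact p.Prime] (h3 : 3 ∣ p - 1) :
    ∃ ζ : ZMod p, ζ ^ 3 = 1 ∧ ζ ≠ 1 := by
  have hcard : Fintype.card (ZMod p)ˣ = p - 1 := ZMod.card_units p
  have h3' : 3 ∣ Fintype.card (ZMod p)ˣ := hcard ▸ h3
  have : Fact (Nat.Prime 3) := ⟨by norm_num⟩
  obtain ⟨g, hg⟩ := exists_prime_orderOf_dvd_card 3 h3'
  refine ⟨(g : ZMod p), ?_, ?_⟩
  · have : g ^ 3 = 1 := by rw [← hg]; exact pow_orderOf_eq_one g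
    have h2 := congrArg Units.val this
    push_cast at h2
    exact h2
  · intro h
    have : g = 1 := Units.ext h
    rw [this] at hg
    simp at hg

lemma fiber_card_three {p : ℕ} [Fact p.Prime] {ζ : ZMod p} (hζ3 : ζ ^ 3 = 1) (hζ1 : ζ ≠ 1)
    {c : ZMod p} (hc : c ≠ 0) :
    (Finset.univ.filter fun x : ZMod p => x ^ 3 = c ^ 3).card = 3 := by
  have hζ0 : ζ ≠ 0 := by rintro rfl; simp at hζ3
  have hset : (Finset.univ.filter fun x : ZMod p => x ^ 3 = c ^ 3) = {c, ζ * c, ζ ^ 2 * c} := by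
    ext x
    simp only [mem_filter, mem_univ, true_and, mem_insert, mem_singleton]
    constructor
    · intro hx
      have hz : (x * c⁻¹) ^ 3 = 1 := by
        field_simp [mul_pow, hx]
        exact hx
      rcases cube_roots_cases hζ3 hζ1 hz with h | h | h
      · left; field_simp at h; exact h
      · right; left; field_simp at h; linear_combination h
      · right; right; field_simp at h; linear_combination h
    · rintro (rfl | rfl | rfl)
      · rfl
      · rw [mul_pow, hζ3, one_mul]
      · rw [mul_pow, ← pow_mul, show (2 : ℕ) * 3 = 3 * 2 by ring, pow_mul, hζ3, one_pow, one_mul]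
  have hsq : ζ ^ 2 ≠ 1 := by
    intro h
    apply hζ1
    linear_combination hζ3 - ζ * h
  rw [hset]
  rw [card_insert_of_notMem, card_insert_of_notMem, card_singleton]
  · simp only [mem_singleton]
    intro h
    have h2 := mul_right_cancel₀ hc h
    exact hζ1 (by linear_combination hζ3 + (ζ + 1) * h2)
  · simp only [mem_insert, mem_singleton]
    rintro (h | h)
    · exact hζ1 (mul_right_cancel₀ hc (show ζ * c = 1 * c by rw [one_mul, ← h]))
    · exact hsq (mul_right_cancel₀ hc (show ζ ^ 2 * c = 1 * c by rw [one_mul, ← h]))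


lemma rep_unique {P a b α β : ℤ} (hP : Prime P) (h1 : P = a ^ 2 + 3 * b ^ 2)
    (h2 : P = α ^ 2 + 3 * β ^ 2) (ha : a % 3 = 2) (hα : α % 3 = 2) (hb : 0 < b) : α = a := by
  have hP3 : 3 ≤ P := by nlinarith [sq_nonneg a, sq_nonneg (a - 1), sq_nonneg (a + 1)]
  -- P divides (aβ - αb)(aβ + αb)
  have hdvd : P ∣ (a * β - α * b) * (a * β + α * b) := by
    refine ⟨β ^ 2 - b ^ 2, by linear_combination (-β ^ 2) * h1 + b ^ 2 * h2⟩
  have hsq : a ^ 2 * β ^ 2 = α ^ 2 * b ^ 2 := by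
    rcases hP.dvd_or_dvd hdvd with h | h
    · obtain ⟨k, hk⟩ := h
      have key : (a * α + 3 * b * β) ^ 2 + 3 * (P * k) ^ 2 = P ^ 2 := by
        rw [← hk]
        linear_combination (-(α ^ 2 + 3 * β ^ 2)) * h1 + (-P) * h2
      have hk0 : k = 0 := by
        by_contra hne
        have habs : 1 ≤ |k| := Int.one_le_abs hne
        have hk1 : 1 ≤ k ^ 2 := by nlinarith [_root_.sq_abs k]
        have hp2 : 9 ≤ P ^ 2 := by nlinarith
        nlinarith [sq_nonneg (a * α + 3 * b * β),
          mul_le_mul_of_nonneg_left hk1 (show (0:ℤ) ≤ P ^ 2 by positivity)]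
      have hz : a * β = α * b := by have := hk; rw [hk0] at this; linarith
      linear_combination (a * β + α * b) * hz
    · obtain ⟨k, hk⟩ := h
      have key : (a * α - 3 * b * β) ^ 2 + 3 * (P * k) ^ 2 = P ^ 2 := by
        rw [← hk]
        linear_combination (-(α ^ 2 + 3 * β ^ 2)) * h1 + (-P) * h2
      have hk0 : k = 0 := by
        by_contra hne
        have habs : 1 ≤ |k| := Int.one_le_abs hne
        have hk1 : 1 ≤ k ^ 2 := by nlinarith [_root_.sq_abs k]
        have hp2 : 9 ≤ P ^ 2 := by nlinarith
        nlinarith [sq_nonneg (a * α - 3 * b * β),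
          mul_le_mul_of_nonneg_left hk1 (show (0:ℤ) ≤ P ^ 2 by positivity)]
      have hz : a * β = -(α * b) := by have := hk; rw [hk0] at this; linarith
      linear_combination (a * β - α * b) * hz
  -- β² = b²
  have hbb : β ^ 2 = b ^ 2 := by
    have hP0 : P ≠ 0 := by omega
    have : P * (β ^ 2 - b ^ 2) = 0 := by
      linear_combination β ^ 2 * h1 - b ^ 2 * h2 + hsq
    rcases mul_eq_zero.mp this with h | h
    · exact absurd h hP0
    · linarith [sub_eq_zero.mp h]
  have haa : α ^ 2 = a ^ 2 := by linarith [h1, h2]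
  have : (α - a) * (α + a) = 0 := by linear_combination haa
  rcases mul_eq_zero.mp this with h | h
  · linarith [sub_eq_zero.mp h]
  · have : α = -a := by linarith
    omega

section Core
variable {p : ℕ} [Fact p.Prime]

lemma gauss_core (hp3 : p % 3 = 1) :
    ∃ A B : ℤ,
      (∑ x ∈ Finset.univ.filter (fun x : ZMod p => ¬ x = 0),
        quadraticChar (ZMod p) (x ^ 3 + 1)) + 1 = 2 * A - B ∧
      (p : ℤ) = A ^ 2 - A * B + B ^ 2 := by
  have hp : p.Prime := Fact.out
  have hp2 : 2 ≤ p := hp.two_le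
  have h3 : 3 ∣ p - 1 := by omega
  -- ω
  have hω := Complex.isPrimitiveRoot_exp 3 (by norm_num)
  set ω : ℂ := Complex.exp (2 * Real.pi * Complex.I / (3:ℕ)) with hωdef
  have hω3 : ω ^ 3 = 1 := hω.pow_eq_one
  have hω1 : ω ≠ 1 := hω.ne_one (by norm_num)
  have hωsum : ω ^ 2 + ω + 1 = 0 := by
    have h := mul_eq_zero.mp (show (ω - 1) * (ω ^ 2 + ω + 1) = 0 by linear_combination hω3)
    rcases h with h | h
    · exact (hω1 (sub_eq_zero.mp h)).elim
    · exact h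
  -- χ of order 3
  obtain ⟨χ, hχord⟩ := MulChar.exists_mulChar_orderOf (ZMod p) (R := ℂ)
    (n := 3) (by rw [ZMod.card]; exact h3) hω
  have hχ3 : χ ^ 3 = 1 := by rw [← hχord]; exact pow_orderOf_eq_one χ
  have hχ1 : χ ≠ 1 := by
    intro h
    rw [h, orderOf_one] at hχord
    norm_num at hχord
  -- conj ω = ω ^ 2
  have hconjω : (starRingEnd ℂ) ω = ω ^ 2 := by
    have h3' : ((starRingEnd ℂ) ω) ^ 3 = 1 := by rw [← map_pow, hω3, map_one]
    rcases cube_roots_cases hω3 hω1 h3' with h | h | h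
    · exfalso
      apply hω1
      have := congrArg (starRingEnd ℂ) h
      rwa [Complex.conj_conj, map_one] at this
    · exfalso
      have hre : ω = (ω.re : ℂ) := (Complex.conj_eq_iff_re.mp h).symm
      rw [hre] at hωsum
      have hr : (ω.re ^ 2 + ω.re + 1 : ℝ) = 0 := by exact_mod_cast hωsum
      nlinarith [sq_nonneg (ω.re + 1/2), sq_nonneg ω.re]
    · exact h
  -- χ values on nonzero elements
  have hχcube : ∀ x : ZMod p, x ≠ 0 → (χ x) ^ 3 = 1 := by
    intro x hx
    rw [← MulChar.pow_apply' χ (by norm_num) x, hχ3, MulChar.one_apply (isUnit_iff_ne_zero.mpr hx)]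
  have hχvals : ∀ x : ZMod p, x ≠ 0 → χ x = 1 ∨ χ x = ω ∨ χ x = ω ^ 2 :=
    fun x hx => cube_roots_cases hω3 hω1 (hχcube x hx)
  have hcube1 : ∀ c : ZMod p, χ (c ^ 3) = 1 ∨ c = 0 := by
    intro c
    by_cases hc : c = 0
    · exact Or.inr hc
    · left; rw [map_pow]; exact hχcube c hc
  -- kernel of χ is exactly the cubes
  set ψ := χ.toUnitHom with hψdef
  have hψval : ∀ a : (ZMod p)ˣ, (ψ a : ℂ) = χ (a : ZMod p) := fun a => MulChar.coe_toUnitHom χ a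
  obtain ⟨g, hg⟩ := IsCyclic.exists_generator (α := (ZMod p)ˣ)
  have hχg : χ (g : ZMod p) ≠ 1 := by
    intro hgone
    apply hχ1
    have hψg : ψ g = 1 := Units.ext (by rw [hψval, hgone, Units.val_one])
    apply MulChar.ext
    intro a
    obtain ⟨k, hk⟩ := hg a
    rw [MulChar.one_apply_coe, ← hk, ← hψval, map_zpow, hψg, one_zpow, Units.val_one]
  have hordψg : orderOf (ψ g) = 3 := by
    have : Fact (Nat.Prime 3) := ⟨by norm_num⟩
    refine orderOf_eq_prime ?_ ?_
    · exact Units.ext (by push_cast [hψval]; exact hχcube _ (Units.ne_zero g))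
    · intro h
      exact hχg (by rw [← hψval, h, Units.val_one])
  have hker : ∀ u : ZMod p, u ≠ 0 → (¬ ∃ c : ZMod p, c ≠ 0 ∧ c ^ 3 = u) → χ u ≠ 1 := by
    intro u hu hnc hone
    have hxu : IsUnit u := isUnit_iff_ne_zero.mpr hu
    obtain ⟨k, hk0⟩ := hg hxu.unit
    have hk : g ^ k = hxu.unit := hk0
    have h3k : ¬ (3:ℤ) ∣ k := by
      intro ⟨m, hm⟩
      apply hnc
      refine ⟨((g ^ m : (ZMod p)ˣ) : ZMod p), Units.ne_zero _, ?_⟩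
      have : (g ^ m) ^ 3 = g ^ k := by
        rw [← zpow_natCast (g ^ m) 3, ← zpow_mul, hm]
        norm_num [mul_comm]
      calc ((g ^ m : (ZMod p)ˣ) : ZMod p) ^ 3 = (((g ^ m) ^ 3 : (ZMod p)ˣ) : ZMod p) := by push_cast; ring
      _ = u := by rw [this, hk, IsUnit.unit_spec]
    apply h3k
    have hψx : ψ hxu.unit = 1 := Units.ext (by rw [hψval, IsUnit.unit_spec, hone, Units.val_one])
    have : (ψ g) ^ k = 1 := by rw [← map_zpow, hk, hψx]
    have := (orderOf_dvd_iff_zpow_eq_one).mpr this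
    rwa [hordψg] at this
  obtain ⟨ζ, hζ3, hζ1⟩ := exists_cube_root_of_unity h3
  have hcnt : ∀ u : ZMod p,
      ((Finset.univ.filter fun x : ZMod p => x ^ 3 = u).card : ℂ) = 1 + χ u + (χ u) ^ 2 := by
    intro u
    by_cases hu : u = 0
    · subst hu
      have hset : (Finset.univ.filter fun x : ZMod p => x ^ 3 = 0) = {0} := by
        ext x
        simp [pow_eq_zero_iff]
      rw [hset, card_singleton, MulChar.map_nonunit χ (by simp : ¬ IsUnit (0 : ZMod p))]
      norm_num
    · by_cases hcube : ∃ c : ZMod p, c ≠ 0 ∧ c ^ 3 = u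
      · obtain ⟨c, hc0, hc3⟩ := hcube
        rw [← hc3, fiber_card_three hζ3 hζ1 hc0]
        rcases hcube1 c with h | h
        · rw [h]; norm_num
        · exact absurd h hc0
      · have hset : (Finset.univ.filter fun x : ZMod p => x ^ 3 = u) = ∅ := by
          ext x
          simp only [mem_filter, mem_univ, true_and, notMem_empty, iff_false]
          intro hx
          apply hcube
          refine ⟨x, ?_, hx⟩
          rintro rfl
          exact hu (by rw [← hx]; norm_num)
        rw [hset, card_empty]
        rcases hχvals u hu with h | h | h
        · exact absurd h (hker u hu hcube)
        · rw [h]; push_cast; linear_combination -hωsum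
        · rw [h]; push_cast; linear_combination (-(ω ^ 2 - ω + 1)) * hωsum
  -- the quadratic character, valued in ℂ
  set q := quadraticChar (ZMod p) with hqdef
  set φC := q.ringHomComp (Int.castRingHom ℂ) with hφCdef
  have hp2' : p ≠ 2 := by rintro rfl; norm_num at hp3
  have hchar2 : ringChar (ZMod p) ≠ 2 := by rw [ZMod.ringChar_zmod_n]; exact hp2'
  have hφ1 : φC ≠ 1 :=
    (MulChar.ringHomComp_ne_one_iff (RingHom.injective_int _)).mpr (quadraticChar_ne_one hchar2)
  have hstep1 : ∑ x : ZMod p, φC (x ^ 3 + 1)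
      = ∑ u : ZMod p, ((Finset.univ.filter fun x : ZMod p => x ^ 3 = u).card : ℂ) * φC (u + 1) := by
    rw [← Finset.sum_fiberwise' Finset.univ (fun x : ZMod p => x ^ 3) (fun u => φC (u + 1))]
    refine Finset.sum_congr rfl fun u _ => ?_
    rw [Finset.sum_const, nsmul_eq_mul]
  have hstep2 : ∑ x : ZMod p, φC (x ^ 3 + 1)
      = (∑ u : ZMod p, φC (u + 1)) + ((∑ u : ZMod p, χ u * φC (u + 1))
          + (∑ u : ZMod p, (χ u) ^ 2 * φC (u + 1))) := by
    rw [hstep1, ← Finset.sum_add_distrib, ← Finset.sum_add_distrib]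
    refine Finset.sum_congr rfl fun u _ => ?_
    rw [hcnt u]; ring
  have hsum0 : ∑ u : ZMod p, φC (u + 1) = 0 := by
    rw [Fintype.sum_equiv (Equiv.addRight (1 : ZMod p)) (fun u => φC (u + 1)) (fun v => φC v)
      (fun u => rfl)]
    exact MulChar.sum_eq_zero_of_ne_one hφ1
  have hχm1 : χ (-1) = 1 := by
    have h2 : χ (-1) * χ (-1) = 1 := by rw [← map_mul]; norm_num
    have h3' : (χ (-1)) ^ 3 = 1 := hχcube (-1) (by
      intro h
      rw [neg_eq_zero] at h
      exact one_ne_zero h)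
    linear_combination h3' - χ (-1) * h2
  have hJ1 : ∑ u : ZMod p, χ u * φC (u + 1) = jacobiSum χ φC := by
    rw [jacobiSum,
      ← Fintype.sum_equiv (Equiv.neg (ZMod p)) (fun x => χ (-x) * φC (-x + 1))
        (fun u => χ u * φC (u + 1)) (fun x => rfl)]
    refine Fintype.sum_congr _ _ fun x => ?_
    rw [show -x = -1 * x by ring, map_mul, hχm1, one_mul,
      show (-1 : ZMod p) * x + 1 = 1 - x by ring]
  have hJ2 : ∑ u : ZMod p, (χ u) ^ 2 * φC (u + 1) = jacobiSum (χ ^ 2) φC := by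
    rw [jacobiSum,
      ← Fintype.sum_equiv (Equiv.neg (ZMod p)) (fun x => (χ (-x)) ^ 2 * φC (-x + 1))
        (fun u => (χ u) ^ 2 * φC (u + 1)) (fun x => rfl)]
    refine Fintype.sum_congr _ _ fun x => ?_
    rw [show -x = -1 * x by ring, map_mul, hχm1, one_mul,
      show (-1 : ZMod p) * x + 1 = 1 - x by ring,
      MulChar.pow_apply' χ (by norm_num) x]
  have hφconj : φC.ringHomComp (starRingEnd ℂ) = φC := by
    apply MulChar.ext
    intro a
    simp [hφCdef, MulChar.ringHomComp_apply, eq_intCast, map_intCast]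
  have hχconj : χ.ringHomComp (starRingEnd ℂ) = χ ^ 2 := by
    apply MulChar.ext
    intro a
    rw [MulChar.ringHomComp_apply, MulChar.pow_apply' χ (by norm_num)]
    rcases hχvals (a : ZMod p) (Units.ne_zero a) with h | h | h
    · rw [h]; norm_num
    · rw [h, hconjω]
    · rw [h, map_pow, hconjω]
  have hconjJ : (starRingEnd ℂ) (jacobiSum χ φC) = jacobiSum (χ ^ 2) φC := by
    have h := jacobiSum_ringHomComp χ φC (starRingEnd ℂ)
    rw [hχconj, hφconj] at h
    exact h.symm
  have hJJ : jacobiSum χ φC * jacobiSum (χ ^ 2) φC = (p : ℂ) := by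
    have hχinv : χ⁻¹ = χ ^ 2 := by
      apply inv_eq_of_mul_eq_one_right
      rw [← pow_succ']
      exact hχ3
    have hφinv : φC⁻¹ = φC := ((quadraticChar_isQuadratic (ZMod p)).comp _).inv
    have hcc : ringChar ℂ ≠ ringChar (ZMod p) := by
      rw [ringChar.eq_zero, ZMod.ringChar_zmod_n]
      exact fun h => hp.ne_zero h.symm
    have hχφ : χ * φC ≠ 1 := by
      intro h
      have h2 : (χ * φC) ^ 2 = 1 := by rw [h, one_pow]
      rw [mul_pow, ((quadraticChar_isQuadratic (ZMod p)).comp _).sq_eq_one, mul_one] at h2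
      have hdvd := orderOf_dvd_of_pow_eq_one h2
      rw [hχord] at hdvd
      norm_num at hdvd
    have h := jacobiSum_mul_jacobiSum_inv hcc hχ1 hφ1 hχφ
    rw [hχinv, hφinv, ZMod.card] at h
    exact h
  obtain ⟨A, B, hAB⟩ : ∃ A B : ℤ, jacobiSum χ φC = (A : ℂ) + (B : ℂ) * ω := by
    rw [jacobiSum]
    refine Finset.sum_induction (fun x : ZMod p => χ x * φC (1 - x))
      (fun z : ℂ => ∃ A B : ℤ, z = (A : ℂ) + (B : ℂ) * ω)
      (by rintro s t ⟨A1, B1, rfl⟩ ⟨A2, B2, rfl⟩; exact ⟨A1 + A2, B1 + B2, by push_cast; ring⟩)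
      ⟨0, 0, by norm_num⟩ ?_
    intro x _
    by_cases hx : x = 0
    · refine ⟨0, 0, ?_⟩
      rw [hx, MulChar.map_nonunit χ (by simp)]
      norm_num
    · obtain ⟨m, hm⟩ : ∃ m : ℤ, φC (1 - x) = (m : ℂ) :=
        ⟨q (1 - x), by simp [hφCdef, MulChar.ringHomComp_apply, eq_intCast]⟩
      rcases hχvals x hx with h | h | h
      · exact ⟨m, 0, by rw [h, hm]; push_cast; ring⟩
      · exact ⟨0, m, by rw [h, hm]; push_cast; ring⟩
      · refine ⟨-m, -m, ?_⟩
        rw [h, hm]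
        push_cast
        linear_combination (m : ℂ) * hωsum
  have hNval : ∑ x : ZMod p, φC (x ^ 3 + 1) = ((2 * A - B : ℤ) : ℂ) := by
    rw [hstep2, hsum0, hJ1, hJ2, zero_add, ← hconjJ, hAB, map_add, map_mul, hconjω,
      map_intCast, map_intCast]
    push_cast
    linear_combination (B : ℂ) * hωsum
  have hpval : (p : ℂ) = ((A ^ 2 - A * B + B ^ 2 : ℤ) : ℂ) := by
    rw [← hJJ, ← hconjJ, hAB, map_add, map_mul, hconjω, map_intCast, map_intCast]
    push_cast
    linear_combination ((A : ℂ) * B) * hωsum + (B : ℂ) ^ 2 * hω3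
  set T : ℤ := ∑ x ∈ Finset.univ.filter (fun x : ZMod p => ¬ x = 0), q (x ^ 3 + 1) with hTdef
  have hN : ∑ x : ZMod p, φC (x ^ 3 + 1) = (T : ℂ) + 1 := by
    rw [← Finset.sum_filter_add_sum_filter_not Finset.univ (fun x : ZMod p => x = 0)]
    have h0 : Finset.univ.filter (fun x : ZMod p => x = 0) = {0} := by ext x; simp
    rw [h0, Finset.sum_singleton, show (0 : ZMod p) ^ 3 + 1 = 1 by norm_num, map_one]
    have hTc : (T : ℂ) = ∑ x ∈ Finset.univ.filter (fun x : ZMod p => ¬ x = 0), φC (x ^ 3 + 1) := by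
      rw [hTdef]
      push_cast
      refine Finset.sum_congr rfl fun x _ => ?_
      simp [hφCdef, MulChar.ringHomComp_apply, eq_intCast]
    rw [hTc]; ring
  refine ⟨A, B, ?_, ?_⟩
  · have h : (T : ℂ) + 1 = ((2 * A - B : ℤ) : ℂ) := by rw [← hN, hNval]
    exact_mod_cast h
  · exact_mod_cast hpval


section Aux
variable {p : ℕ} [Fact p.Prime]

lemma sum_Icc_eq {M : Type*} [AddCommMonoid M] (g : ZMod p → M) :
    ∑ c ∈ Finset.Icc 1 (p - 1), g ((c : ZMod p))
      = ∑ x ∈ Finset.univ.filter (fun x : ZMod p => ¬ x = 0), g x := by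
  have hp : p.Prime := Fact.out
  have hp2 : 2 ≤ p := hp.two_le
  refine Finset.sum_bij (fun c _ => (c : ZMod p)) ?_ ?_ ?_ ?_
  · intro c hc
    rw [Finset.mem_Icc] at hc
    simp only [mem_filter, mem_univ, true_and]
    intro h0
    rw [ZMod.natCast_eq_zero_iff] at h0
    have hdvd := h0
    have := Nat.le_of_dvd (by omega) hdvd
    omega
  · intro c1 h1 c2 h2 heq
    have heq' : (c1 : ZMod p) = (c2 : ZMod p) := heq
    rw [Finset.mem_Icc] at h1 h2
    have e1 : ((c1 : ZMod p)).val = c1 := ZMod.val_natCast_of_lt (by omega)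
    have e2 : ((c2 : ZMod p)).val = c2 := ZMod.val_natCast_of_lt (by omega)
    rw [← e1, ← e2, heq']
  · intro x hx
    simp only [mem_filter, mem_univ, true_and] at hx
    refine ⟨x.val, ?_, ?_⟩
    · rw [Finset.mem_Icc]
      have h1 : x.val < p := ZMod.val_lt x
      have h0 : x.val ≠ 0 := fun h => hx (by rwa [← ZMod.val_eq_zero])
      omega
    · simp [ZMod.natCast_val, ZMod.cast_id]
  · intro c _
    rfl

lemma quadSum_mod3 (hp3 : p % 3 = 1) :
    (3 : ℤ) ∣ ∑ x ∈ Finset.univ.filter (fun x : ZMod p => ¬ x = 0),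
      quadraticChar (ZMod p) (x ^ 3 + 1) := by
  have hp : p.Prime := Fact.out
  have h3 : 3 ∣ p - 1 := by have := hp.two_le; omega
  obtain ⟨ζ, hζ3, hζ1⟩ := exists_cube_root_of_unity h3
  rw [← Finset.sum_fiberwise' (Finset.univ.filter (fun x : ZMod p => ¬ x = 0))
    (fun x => x ^ 3) (fun u => quadraticChar (ZMod p) (u + 1))]
  apply Finset.dvd_sum
  intro u _
  rw [Finset.sum_const, nsmul_eq_mul]
  apply Dvd.dvd.mul_right
  by_cases hne : ((Finset.univ.filter (fun x : ZMod p => ¬ x = 0)).filter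
      (fun x => x ^ 3 = u)).Nonempty
  · obtain ⟨c, hc⟩ := hne
    simp only [mem_filter, mem_univ, true_and] at hc
    obtain ⟨hc0, hc3⟩ := hc
    have hset : (Finset.univ.filter (fun x : ZMod p => ¬ x = 0)).filter (fun x => x ^ 3 = u)
        = Finset.univ.filter (fun x : ZMod p => x ^ 3 = c ^ 3) := by
      ext x
      simp only [mem_filter, mem_univ, true_and, ← hc3]
      constructor
      · exact fun h => h.2
      · intro h
        refine ⟨?_, h⟩
        intro hx0
        rw [hx0] at h
        apply hc0
        have : c ^ 3 = 0 := by rw [← h]; norm_num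
        exact pow_eq_zero_iff (by norm_num) |>.mp this
    rw [hset, fiber_card_three hζ3 hζ1 hc0]
    norm_num
  · rw [Finset.not_nonempty_iff_eq_empty] at hne
    rw [hne, Finset.card_empty]
    norm_num
lemma quadSum_sq (hodd : Odd p) (hp3 : p % 3 = 1) :
    ∑ x ∈ Finset.univ.filter (fun x : ZMod p => ¬ x = 0),
      (quadraticChar (ZMod p) (x ^ 3 + 1)) ^ 2 = (p : ℤ) - 4 := by
  have hp : p.Prime := Fact.out
  have hp2 : 2 ≤ p := hp.two_le
  have h3 : 3 ∣ p - 1 := by omega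
  obtain ⟨ζ, hζ3, hζ1⟩ := exists_cube_root_of_unity h3
  have hm1 : (-1 : ZMod p) ≠ 0 := by
    simp only [ne_eq, neg_eq_zero]
    exact one_ne_zero
  set s := Finset.univ.filter (fun x : ZMod p => ¬ x = 0) with hs
  rw [← Finset.sum_filter_add_sum_filter_not s (fun x : ZMod p => x ^ 3 = -1)]
  have hfirst : ∑ x ∈ s.filter (fun x : ZMod p => x ^ 3 = -1),
      (quadraticChar (ZMod p) (x ^ 3 + 1)) ^ 2 = 0 := by
    apply Finset.sum_eq_zero
    intro x hx
    simp only [hs, mem_filter, mem_univ, true_and] at hx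
    rw [hx.2]
    norm_num
  have hcard1 : (s.filter (fun x : ZMod p => x ^ 3 = -1)).card = 3 := by
    have hset : s.filter (fun x : ZMod p => x ^ 3 = -1)
        = Finset.univ.filter (fun x : ZMod p => x ^ 3 = (-1 : ZMod p) ^ 3) := by
      ext x
      simp only [hs, mem_filter, mem_univ, true_and]
      constructor
      · intro h
        rw [h.2]
        norm_num
      · intro h
        have h' : x ^ 3 = -1 := by rw [h]; norm_num
        refine ⟨?_, h'⟩
        intro hx0
        rw [hx0] at h'
        exact hm1 (by rw [← h']; norm_num)
    rw [hset]
    exact fiber_card_three hζ3 hζ1 hm1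
  have hsecond : ∑ x ∈ s.filter (fun x : ZMod p => ¬ x ^ 3 = -1),
      (quadraticChar (ZMod p) (x ^ 3 + 1)) ^ 2
      = ((s.filter (fun x : ZMod p => ¬ x ^ 3 = -1)).card : ℤ) := by
    rw [Finset.sum_congr rfl (fun x hx => ?_), Finset.sum_const, nsmul_eq_mul, mul_one]
    simp only [hs, mem_filter, mem_univ, true_and] at hx
    have : x ^ 3 + 1 ≠ 0 := by
      intro h
      exact hx.2 (by linear_combination h)
    exact quadraticChar_sq_one this
  have hcards : s.card = p - 1 := by
    have : s = Finset.univ.erase (0 : ZMod p) := by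
      ext x; simp [hs]
    rw [this, Finset.card_erase_of_mem (Finset.mem_univ _), Finset.card_univ, ZMod.card]
  have hcard2 : (s.filter (fun x : ZMod p => ¬ x ^ 3 = -1)).card = p - 4 := by
    have := Finset.card_filter_add_card_filter_not
      (s := s) (p := fun x : ZMod p => x ^ 3 = -1)
    omega
  rw [hfirst, hsecond, hcard2, zero_add]
  have : 4 ≤ p := by omega
  push_cast [Nat.cast_sub (by omega : 4 ≤ p)]
  ring

lemma part2_sum (hodd : Odd p) (hp3 : p % 3 = 2) :
    ∑ x ∈ Finset.univ.filter (fun x : ZMod p => ¬ x = 0),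
      quadraticChar (ZMod p) (x ^ 3 + 1) = -1 := by
  have hp : p.Prime := Fact.out
  have hp2 : 2 ≤ p := hp.two_le
  have hpne2 : p ≠ 2 := by
    have := Nat.odd_iff.mp hodd
    omega
  have hchar2 : ringChar (ZMod p) ≠ 2 := by rw [ZMod.ringChar_zmod_n]; exact hpne2
  -- the cube map is bijective
  have hcop : Nat.Coprime (Nat.card (ZMod p)ˣ) 3 := by
    rw [Nat.card_eq_fintype_card, ZMod.card_units_eq_totient, Nat.totient_prime hp]
    have : ¬ 3 ∣ p - 1 := by omega
    rwa [Nat.coprime_comm, Nat.Prime.coprime_iff_not_dvd (by norm_num)]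
  have hinj : Function.Injective (fun x : ZMod p => x ^ 3) := by
    intro x y hxy
    simp only at hxy
    by_cases hx : x = 0
    · subst hx
      rw [eq_comm]
      have : y ^ 3 = 0 := by rw [← hxy]; norm_num
      exact pow_eq_zero_iff (by norm_num) |>.mp this
    · by_cases hy : y = 0
      · subst hy
        have : x ^ 3 = 0 := by rw [hxy]; norm_num
        exact pow_eq_zero_iff (by norm_num) |>.mp this
      · have hxu := (isUnit_iff_ne_zero).mpr hx
        have hyu := (isUnit_iff_ne_zero).mpr hy
        have hueq : hxu.unit ^ 3 = hyu.unit ^ 3 := by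
          apply Units.ext
          push_cast [IsUnit.unit_spec]
          exact hxy
        have := (powCoprime hcop).injective (a₁ := hxu.unit) (a₂ := hyu.unit) hueq
        rw [← hxu.unit_spec, ← hyu.unit_spec, this]
  have hbij : Function.Bijective (fun x : ZMod p => x ^ 3) :=
    Finite.injective_iff_bijective.mp hinj
  -- reindex the sum
  have hstep : ∑ x ∈ Finset.univ.filter (fun x : ZMod p => ¬ x = 0),
      quadraticChar (ZMod p) (x ^ 3 + 1)
      = ∑ y ∈ Finset.univ.filter (fun y : ZMod p => ¬ y = 1),
        quadraticChar (ZMod p) y := by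
    refine Finset.sum_bij (fun x _ => x ^ 3 + 1) ?_ ?_ ?_ ?_
    · intro x hx
      simp only [mem_filter, mem_univ, true_and] at hx ⊢
      intro h
      apply hx
      have hx3 : x ^ 3 = 0 := by linear_combination h
      exact pow_eq_zero_iff (by norm_num) |>.mp hx3
    · intro x1 h1 x2 h2 heq
      have : x1 ^ 3 = x2 ^ 3 := by
        have h := heq
        linear_combination h
      exact hinj this
    · intro y hy
      simp only [mem_filter, mem_univ, true_and] at hy
      obtain ⟨x, hx⟩ := hbij.surjective (y - 1)
      simp only at hx
      refine ⟨x, ?_, ?_⟩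
      · simp only [mem_filter, mem_univ, true_and]
        intro h0
        rw [h0] at hx
        apply hy
        have : (0 : ZMod p) ^ 3 = 0 := by norm_num
        rw [this] at hx
        linear_combination -hx
      · rw [hx]
        ring
    · intro x _
      rfl
  rw [hstep]
  have hsplit := Finset.sum_filter_add_sum_filter_not Finset.univ
    (fun y : ZMod p => ¬ y = 1) (fun y => quadraticChar (ZMod p) y)
  have hall : ∑ y : ZMod p, quadraticChar (ZMod p) y = 0 := quadraticChar_sum_zero hchar2
  have hone : ∑ y ∈ Finset.univ.filter (fun y : ZMod p => ¬ ¬ y = 1),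
      quadraticChar (ZMod p) y = 1 := by
    have : Finset.univ.filter (fun y : ZMod p => ¬ ¬ y = 1) = {1} := by
      ext y; simp
    rw [this, Finset.sum_singleton]
    exact map_one _
  omega


theorem sum_legendre_cube_plus_one (p : ℕ) [Fact p.Prime] (hodd : Odd p) :
    (∀ a b : ℤ, a % 3 = 2 → 0 < b → (p : ℤ) = a ^ 2 + 3 * b ^ 2 →
      ∑ c ∈ Finset.Icc 1 (p - 1), legendreSym p ((c : ℤ) ^ 3 + 1) = 2 * a - 1) ∧
    (p % 3 = 2 →
      ∑ c ∈ Finset.Icc 1 (p - 1), legendreSym p ((c : ℤ) ^ 3 + 1) = -1) := by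
  have hp : p.Prime := Fact.out
  have hp2 : 2 ≤ p := hp.two_le
  have hpodd : p % 2 = 1 := Nat.odd_iff.mp hodd
  have hconv : ∑ c ∈ Finset.Icc 1 (p - 1), legendreSym p ((c : ℤ) ^ 3 + 1)
      = ∑ x ∈ Finset.univ.filter (fun x : ZMod p => ¬ x = 0),
          quadraticChar (ZMod p) (x ^ 3 + 1) := by
    rw [← sum_Icc_eq (fun x : ZMod p => quadraticChar (ZMod p) (x ^ 3 + 1))]
    refine Finset.sum_congr rfl fun c _ => ?_
    show quadraticChar (ZMod p) ((((c : ℕ) : ℤ) ^ 3 + 1 : ℤ) : ZMod p) = _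
    congr 1
    push_cast
    ring
  constructor
  · intro a b ha hb hab
    have hp3 : p % 3 = 1 := by
      have h1 : (p : ℤ) % 3 = 1 := by
        obtain ⟨k, hk⟩ : ∃ k, a = 3 * k + 2 := ⟨(a - 2) / 3, by omega⟩
        subst hk
        rw [hab, show (3 * k + 2) ^ 2 + 3 * b ^ 2
          = 3 * (3 * k ^ 2 + 4 * k + b ^ 2 + 1) + 1 by ring]
        omega
      omega
    obtain ⟨A, B, hTAB, hpAB⟩ := gauss_core hp3
    set T := ∑ x ∈ Finset.univ.filter (fun x : ZMod p => ¬ x = 0),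
      quadraticChar (ZMod p) (x ^ 3 + 1) with hTdef
    have h3T : (3 : ℤ) ∣ T := quadSum_mod3 hp3
    have hsq := quadSum_sq (p := p) hodd hp3
    have heven : (2 : ℤ) ∣ ((p : ℤ) - 4 - T) := by
      rw [← hsq, hTdef, ← Finset.sum_sub_distrib]
      apply Finset.dvd_sum
      intro x _
      obtain ⟨t, ht⟩ := Int.even_mul_succ_self (quadraticChar (ZMod p) (x ^ 3 + 1) - 1)
      exact ⟨t, by linear_combination ht⟩
    have hBeven : (2 : ℤ) ∣ B := by omega
    obtain ⟨β, hβ⟩ := hBeven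
    have hrep : (p : ℤ) = (A - β) ^ 2 + 3 * β ^ 2 := by
      linear_combination hpAB + (B + 2 * β - A) * hβ
    have hT2α : T = 2 * (A - β) - 1 := by omega
    have hα3 : (A - β) % 3 = 2 := by omega
    have huniq : A - β = a := rep_unique (Nat.prime_iff_prime_int.mp hp) hab hrep ha hα3 hb
    rw [hconv, hT2α, huniq]
  · intro hp3
    rw [hconv]
    exact part2_sum hodd hp3
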